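/- Let X be a finite-dimensional normed space, F ⊆ X nonempty closed convex with 0 ∈ F, and Q ⊆ X nonempty compact. Then the minimal time function T_Q^F is lower semicontinuous on X. -/

import Mathlib

open scoped ENNReal Pointwise

/-- The minimal time function `T_Q^F`. -/
noncomputable def minTime {X : Type*} [NormedAddCommGroup X] [NormedSpace ℝ X]
    (F Q : Set X) (x : X) : ℝ≥0∞ :=
  sInf (ENNReal.ofReal '' {t : ℝ | 0 ≤ t ∧ ∃ f ∈ F, x + t • f ∈ Q})

theorem minTime_lowerSemicontinuous {X : Type*} [NormedAddCommGroup X] [NormedSpace ℝ X]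
    [FiniteDimensional ℝ X]
    (F : Set X) (hFne : F.Nonempty) (hFcl : IsClosed F) (hFconv : Convex ℝ F)
    (h0F : (0 : X) ∈ F) (Q : Set X) (hQne : Q.Nonempty) (hQcpt : IsCompact Q) :
    LowerSemicontinuous (minTime F Q) := by
  intro x c hc
  obtain ⟨d, hcd, hdx⟩ := exists_between hc
  have hdtop : d ≠ ⊤ := fun h => by
    rw [h] at hdx
    exact (not_top_lt hdx).elim
  set r : ℝ := d.toReal with hr
  have hdr : ENNReal.ofReal r = d := ENNReal.ofReal_toReal hdtop
  have hrpos : 0 < r := by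
    have : 0 < d := lt_of_le_of_lt zero_le hcd
    exact ENNReal.toReal_pos this.ne' hdtop
  -- the "bad" set
  set C : Set X := Q + (-r) • F with hC
  have hCclosed : IsClosed C := by
    have : IsClosed ((-r) • F) :=
      hFcl.smul_of_ne_zero (by simpa using hrpos.ne')
    exact this.add_left_of_isCompact hQcpt
  -- key: y ∉ C → d ≤ minTime F Q y
  have key : ∀ y : X, y ∉ C → ENNReal.ofReal r ≤ minTime F Q y := by
    intro y hy
    apply le_sInf
    rintro b ⟨t, ⟨ht0, f, hfF, hfQ⟩, rfl⟩
    apply ENNReal.ofReal_le_ofReal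
    by_contra hlt
    push_neg at hlt
    -- t < r; then using convexity, r works too, so y ∈ C, contradiction
    have hf' : (t / r) • f ∈ F := by
      have := hFconv h0F hfF (a := 1 - t / r) (b := t / r)
        (by
          have : t / r ≤ 1 := by
            rw [div_le_one hrpos]; exact hlt.le
          linarith)
        (div_nonneg ht0 hrpos.le) (by ring)
      simpa using this
    apply hy
    refine ⟨y + t • f, hfQ, (-r) • ((t / r) • f), Set.smul_mem_smul_set hf', ?_⟩
    rw [smul_smul]
    have h : -r * (t / r) = -t := by field_simp
    rw [h]
    module
  -- x ∉ C
  have hxC : x ∉ C := by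
    rintro ⟨q, hq, v, ⟨f, hfF, rfl⟩, rfl⟩
    have hle : minTime F Q (q + (-r) • f) ≤ ENNReal.ofReal r := by
      apply sInf_le
      refine ⟨r, ⟨hrpos.le, f, hfF, ?_⟩, rfl⟩
      have h : q + (-r) • f + r • f = q := by module
      rw [h]; exact hq
    rw [hdr] at hle
    exact absurd (lt_of_lt_of_le hdx hle) (lt_irrefl _)
  have hopen : IsOpen Cᶜ := hCclosed.isOpen_compl
  filter_upwards [hopen.mem_nhds hxC] with y hy
  calc c < d := hcd
    _ = ENNReal.ofReal r := hdr.symm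
    _ ≤ minTime F Q y := key y hy
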